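/- Let n ≥ 1, W a linear subspace of ℝⁿ, d, c ∈ ℝⁿ, P = {x ∈ ℝⁿ : x ∈ W + d, x ≥ 0}, D = {s ∈ ℝⁿ : s ∈ W⊥ + c, s ≥ 0}. Assume x⋆ ∈ P, s⋆ ∈ D with ⟨x⋆, s⋆⟩ = 0, and that there exists s° ∈ D with s° > 0 entrywise, so that x^m_i(g) = sup{x_i : x ∈ P, ⟨x, s⋆⟩ ≤ g} is finite for all g ≥ 0. Then for every i ∈ [n], every g ≥ 0 and every real α ≥ 1: x^m_i(α·g) ≤ α·x^m_i(g) and x^m_i(g/α) ≥ x^m_i(g)/α. -/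

import Mathlib

open scoped RealInnerProductSpace

/-- The `i`-th coordinate `x^m_i(g)` of the primal max central path:
the supremum of `x i` over primal feasible points `x` with optimality gap at most `g`. -/
noncomputable def primalMCP (n : ℕ) (W : Submodule ℝ (EuclideanSpace ℝ (Fin n)))
    (d sstar : EuclideanSpace ℝ (Fin n)) (g : ℝ) (i : Fin n) : ℝ :=
  sSup {t : ℝ | ∃ x : EuclideanSpace ℝ (Fin n),
    x - d ∈ W ∧ (∀ j, 0 ≤ x j) ∧ ⟪x, sstar⟫ ≤ g ∧ t = x i}

theorem statement13 (n : ℕ) (hn : 1 ≤ n)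
    (W : Submodule ℝ (EuclideanSpace ℝ (Fin n)))
    (d c xstar sstar : EuclideanSpace ℝ (Fin n))
    (hxstarW : xstar - d ∈ W) (hxstarpos : ∀ i, 0 ≤ xstar i)
    (hsstarW : sstar - c ∈ Wᗮ) (hsstarpos : ∀ i, 0 ≤ sstar i)
    (hopt : ⟪xstar, sstar⟫ = 0)
    (s₀ : EuclideanSpace ℝ (Fin n)) (hs₀W : s₀ - c ∈ Wᗮ) (hs₀pos : ∀ i, 0 < s₀ i) :
    ∀ i : Fin n, ∀ g α : ℝ, 0 ≤ g → 1 ≤ α →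
      primalMCP n W d sstar (α * g) i ≤ α * primalMCP n W d sstar g i ∧
      primalMCP n W d sstar g i / α ≤ primalMCP n W d sstar (g / α) i := by
  intro i g α hg hα
  have hα0 : (0:ℝ) < α := lt_of_lt_of_le one_pos hα
  set S : ℝ → Set ℝ := fun G => {t : ℝ | ∃ x : EuclideanSpace ℝ (Fin n),
    x - d ∈ W ∧ (∀ j, 0 ≤ x j) ∧ ⟪x, sstar⟫ ≤ G ∧ t = x i} with hSdef
  have hmcp : ∀ G : ℝ, primalMCP n W d sstar G i = sSup (S G) := fun G => rfl
  have hne : ∀ G : ℝ, 0 ≤ G → (S G).Nonempty := by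
    intro G hG
    exact ⟨xstar i, xstar, hxstarW, hxstarpos, by rw [hopt]; exact hG, rfl⟩
  have hbdd : ∀ G : ℝ, BddAbove (S G) := by
    intro G
    refine ⟨(G + (⟪d, s₀⟫ - ⟪d, sstar⟫)) / s₀ i, ?_⟩
    rintro t ⟨x, hxW, hxpos, hxgap, rfl⟩
    have hmem : s₀ - sstar ∈ Wᗮ := by
      have := sub_mem hs₀W hsstarW
      simpa using this
    have horth : ⟪x - d, s₀ - sstar⟫ = 0 :=
      Submodule.inner_right_of_mem_orthogonal hxW hmem
    have hkey : ⟪x, s₀⟫ = ⟪x, sstar⟫ + (⟪d, s₀⟫ - ⟪d, sstar⟫) := by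
      rw [inner_sub_left, inner_sub_right, inner_sub_right] at horth
      linarith
    have hsum : x i * s₀ i ≤ ⟪x, s₀⟫ := by
      rw [PiLp.inner_apply]
      simp only [RCLike.inner_apply, conj_trivial]
      have := Finset.single_le_sum (f := fun j => x j * s₀ j)
        (fun j _ => mul_nonneg (hxpos j) (hs₀pos j).le) (Finset.mem_univ i)
      simpa [mul_comm] using this
    rw [le_div_iff₀ (hs₀pos i)]
    calc x i * s₀ i ≤ ⟪x, s₀⟫ := hsum
      _ ≤ G + (⟪d, s₀⟫ - ⟪d, sstar⟫) := by rw [hkey]; linarith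
  -- key lemma
  have key : ∀ G : ℝ, 0 ≤ G → sSup (S G) ≤ α * sSup (S (G / α)) := by
    intro G hG
    refine csSup_le (hne G hG) ?_
    rintro t ⟨x, hxW, hxpos, hxgap, rfl⟩
    set y : EuclideanSpace ℝ (Fin n) := α⁻¹ • x + (1 - α⁻¹) • xstar with hy
    have hαinv : 0 < α⁻¹ := inv_pos.mpr hα0
    have hαinv1 : α⁻¹ ≤ 1 := by
      have h1 : α⁻¹ * α = 1 := inv_mul_cancel₀ hα0.ne'
      nlinarith
    have hyW : y - d ∈ W := by
      have heq : y - d = α⁻¹ • (x - d) + (1 - α⁻¹) • (xstar - d) := by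
        rw [hy]; module
      rw [heq]
      exact add_mem (W.smul_mem _ hxW) (W.smul_mem _ hxstarW)
    have hycoord : ∀ j, y j = α⁻¹ * x j + (1 - α⁻¹) * xstar j := by
      intro j
      simp [hy, smul_eq_mul]
    have hypos : ∀ j, 0 ≤ y j := by
      intro j
      rw [hycoord j]
      have := hxstarpos j
      have := hxpos j
      nlinarith
    have hygap : ⟪y, sstar⟫ ≤ G / α := by
      rw [hy, inner_add_left, real_inner_smul_left, real_inner_smul_left, hopt]
      have : α⁻¹ * ⟪x, sstar⟫ ≤ α⁻¹ * G := by
        exact mul_le_mul_of_nonneg_left hxgap hαinv.le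
      rw [div_eq_inv_mul]
      linarith
    have hymem : y i ∈ S (G / α) := ⟨y, hyW, hypos, hygap, rfl⟩
    have hyle : y i ≤ sSup (S (G / α)) := le_csSup (hbdd _) hymem
    have hxi : x i = α * y i - (α - 1) * xstar i := by
      rw [hycoord i]
      field_simp
      ring
    have hxs := hxstarpos i
    nlinarith [mul_le_mul_of_nonneg_left hyle hα0.le]
  constructor
  · have h := key (α * g) (by positivity)
    rw [show α * g / α = g by field_simp] at h
    rw [hmcp, hmcp]
    exact h
  · rw [hmcp, hmcp, div_le_iff₀ hα0]
    have h := key g hg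
    linarith [key g hg]
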